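/- Canonicity of axiom B3: let F = (A, Q, ▷, ◇, ▷', ◇') be a heterogeneous LRC-algebra with canonical extensions A^δ, Q^δ, π-extended operation ▷^π, and σ-extended product ·^σ. Then q ▷^π (w ▷^π u) ≤ (q ·^σ w) ▷^π u for all q, w ∈ Q^δ and u ∈ A^δ. -/

import Mathlib

/-! ## Heterogeneous LRC-algebras -/

/-- A heterogeneous LRC-algebra `F = (W, R, ▷, ◇, ▷', ◇')`: `W` is a Heyting
algebra, `R` is a bounded distributive lattice with an associative product
`·` (here `mul`) preserving finite joins in each coordinate whose unit is the
top element `1 = ⊤` of `R`; `◇ : W → W` (`dia`) and `◇' : R → W` (`diaR`)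
preserve finite joins; `▷ : R × W → W` (`box`) turns finite joins in its first
coordinate into meets and is monotone in its second coordinate;
`▷' : R × R → W` (`boxR`) turns finite joins in its first coordinate into
meets and preserves finite meets in its second coordinate; and the axioms
B3, BD1, BD2 hold. -/
structure LRCAlgebra (W : Type*) (R : Type*) [iW : HeytingAlgebra W]
    [iR : DistribLattice R] [iB : BoundedOrder R] where
  mul : R → R → R
  mul_assoc : ∀ a b c, mul (mul a b) c = mul a (mul b c)
  mul_top : ∀ a, mul a ⊤ = a
  top_mul : ∀ a, mul ⊤ a = a
  mul_sup_left : ∀ a b c, mul (a ⊔ b) c = mul a c ⊔ mul b c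
  mul_sup_right : ∀ a b c, mul a (b ⊔ c) = mul a b ⊔ mul a c
  mul_bot_left : ∀ a, mul ⊥ a = ⊥
  mul_bot_right : ∀ a, mul a ⊥ = ⊥
  dia : W → W
  dia_bot : dia ⊥ = ⊥
  dia_sup : ∀ a b, dia (a ⊔ b) = dia a ⊔ dia b
  diaR : R → W
  diaR_bot : diaR ⊥ = ⊥
  diaR_sup : ∀ a b, diaR (a ⊔ b) = diaR a ⊔ diaR b
  box : R → W → W
  box_sup : ∀ α β a, box (α ⊔ β) a = box α a ⊓ box β a
  box_bot : ∀ a, box ⊥ a = ⊤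
  box_mono : ∀ (α : R) {a b : W}, a ≤ b → box α a ≤ box α b
  boxR : R → R → W
  boxR_sup : ∀ α β γ, boxR (α ⊔ β) γ = boxR α γ ⊓ boxR β γ
  boxR_bot : ∀ γ, boxR ⊥ γ = ⊤
  boxR_inf : ∀ α β γ, boxR α (β ⊓ γ) = boxR α β ⊓ boxR α γ
  boxR_top : ∀ α, boxR α ⊤ = ⊤
  b3 : ∀ α β a, box α (box β a) ≤ box (mul α β) a
  bd1 : ∀ α a, diaR α ⊓ box α a ≤ dia a
  bd2 : ∀ α β, boxR α β ≤ box α (diaR β)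

/-! ## Canonical extensions of bounded distributive lattices -/

/-- A *canonical extension* of a bounded distributive lattice `L` is a
complete (distributive) lattice `Lδ` containing `L` as a bounded sublattice
(via the embedding `e`) such that (denseness) every element of `Lδ` is both a
join of closed elements (meets of elements of `L`) and a meet of open elements
(joins of elements of `L`), and (compactness) whenever `⋀ e '' S ≤ ⋁ e '' T`
there are finite `F ⊆ S`, `G ⊆ T` with `⋀ e '' F ≤ ⋁ e '' G`. -/
structure CanonicalExtension (L : Type*) [DistribLattice L] [OrderBot L]
    [OrderTop L] (Lδ : Type*) [CompleteLattice Lδ] where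
  e : L → Lδ
  inj : Function.Injective e
  map_sup : ∀ a b, e (a ⊔ b) = e a ⊔ e b
  map_inf : ∀ a b, e (a ⊓ b) = e a ⊓ e b
  map_bot : e ⊥ = ⊥
  map_top : e ⊤ = ⊤
  dense_closed : ∀ u : Lδ,
    u = sSup {k | (∃ S : Set L, k = sInf (e '' S)) ∧ k ≤ u}
  dense_open : ∀ u : Lδ,
    u = sInf {o | (∃ S : Set L, o = sSup (e '' S)) ∧ u ≤ o}
  compact : ∀ S T : Set L, sInf (e '' S) ≤ sSup (e '' T) →
    ∃ Fs Gs : Finset L, ↑Fs ⊆ S ∧ ↑Gs ⊆ T ∧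
      sInf (e '' ↑Fs) ≤ sSup (e '' ↑Gs)

namespace CanonicalExtension

variable {L : Type*} [DistribLattice L] [OrderBot L] [OrderTop L]
  {Lδ : Type*} [CompleteLattice Lδ]

/-- An element of `Lδ` is *closed* if it is a meet of elements of `L`. -/
def IsClosed (C : CanonicalExtension L Lδ) (k : Lδ) : Prop :=
  ∃ S : Set L, k = sInf (C.e '' S)

/-- An element of `Lδ` is *open* if it is a join of elements of `L`. -/
def IsOpen (C : CanonicalExtension L Lδ) (o : Lδ) : Prop :=
  ∃ S : Set L, o = sSup (C.e '' S)

end CanonicalExtension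

/-! ## The σ- and π-extensions of the operations of a heterogeneous
LRC-algebra to the canonical extensions -/

section Extensions

variable {W R : Type*} [HeytingAlgebra W] [DistribLattice R] [BoundedOrder R]
  {Wδ Rδ : Type*} [CompletelyDistribLattice Wδ] [CompletelyDistribLattice Rδ]
  (F : LRCAlgebra W R)
  (CW : CanonicalExtension W Wδ) (CR : CanonicalExtension R Rδ)

/-- `◇^σ`: for closed `k`, `◇^σ k = ⋀{◇a : a ∈ W, k ≤ a}`, and for arbitrary
`u`, `◇^σ u = ⋁{◇^σ k : k closed, k ≤ u}`. -/
noncomputable def diaSigma (u : Wδ) : Wδ :=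
  ⨆ k : {k : Wδ // CW.IsClosed k ∧ k ≤ u},
    ⨅ a : {a : W // k.1 ≤ CW.e a}, CW.e (F.dia a.1)

/-- `◇'^σ`: for closed `κ`, `◇'^σ κ = ⋀{◇'α : α ∈ R, κ ≤ α}`, and for
arbitrary `q`, `◇'^σ q = ⋁{◇'^σ κ : κ closed, κ ≤ q}`. -/
noncomputable def diaRSigma (q : Rδ) : Wδ :=
  ⨆ κ : {κ : Rδ // CR.IsClosed κ ∧ κ ≤ q},
    ⨅ α : {α : R // κ.1 ≤ CR.e α}, CW.e (F.diaR α.1)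

/-- `κ ▷^π o` for `κ ∈ K(Rδ)`, `o ∈ O(Wδ)`:
`⋁{α ▷ a : a ∈ W, a ≤ o, α ∈ R, κ ≤ α}`. -/
noncomputable def boxPiKO (κ : Rδ) (o : Wδ) : Wδ :=
  ⨆ p : {p : R × W // CW.e p.2 ≤ o ∧ κ ≤ CR.e p.1}, CW.e (F.box p.1.1 p.1.2)

/-- `▷^π`: `q ▷^π u = ⋀{κ ▷^π o : o open, u ≤ o, κ closed, κ ≤ q}`. -/
noncomputable def boxPi (q : Rδ) (u : Wδ) : Wδ :=
  ⨅ x : {x : Rδ × Wδ // CW.IsOpen x.2 ∧ u ≤ x.2 ∧ CR.IsClosed x.1 ∧ x.1 ≤ q},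
    boxPiKO F CW CR x.1.1 x.1.2

/-- `κ ▷'^π ω` for `κ ∈ K(Rδ)`, `ω ∈ O(Rδ)`:
`⋁{α ▷' β : β ∈ R, β ≤ ω, α ∈ R, κ ≤ α}`. -/
noncomputable def boxRPiKO (κ ω : Rδ) : Wδ :=
  ⨆ p : {p : R × R // CR.e p.2 ≤ ω ∧ κ ≤ CR.e p.1}, CW.e (F.boxR p.1.1 p.1.2)

/-- `▷'^π`: `q ▷'^π w = ⋀{κ ▷'^π ω : ω open, w ≤ ω, κ closed, κ ≤ q}`. -/
noncomputable def boxRPi (q w : Rδ) : Wδ :=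
  ⨅ x : {x : Rδ × Rδ // CR.IsOpen x.2 ∧ w ≤ x.2 ∧ CR.IsClosed x.1 ∧ x.1 ≤ q},
    boxRPiKO F CW CR x.1.1 x.1.2

/-- `κ₁ ·^σ κ₂` for closed `κ₁, κ₂`: `⋀{α·β : α, β ∈ R, κ₁ ≤ α, κ₂ ≤ β}`. -/
noncomputable def mulSigmaKK (κ₁ κ₂ : Rδ) : Rδ :=
  ⨅ p : {p : R × R // κ₁ ≤ CR.e p.1 ∧ κ₂ ≤ CR.e p.2}, CR.e (F.mul p.1.1 p.1.2)

/-- `·^σ`: `q₁ ·^σ q₂ = ⋁{κ₁ ·^σ κ₂ : κ₁, κ₂ closed, κ₁ ≤ q₁, κ₂ ≤ q₂}`. -/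
noncomputable def mulSigma (q₁ q₂ : Rδ) : Rδ :=
  ⨆ p : {p : Rδ × Rδ // CR.IsClosed p.1 ∧ CR.IsClosed p.2 ∧
      p.1 ≤ q₁ ∧ p.2 ≤ q₂}, mulSigmaKK F CR p.1.1 p.1.2

end Extensions

variable {W R : Type*} [HeytingAlgebra W] [DistribLattice R] [BoundedOrder R]
  {Wδ Rδ : Type*} [CompletelyDistribLattice Wδ] [CompletelyDistribLattice Rδ]

/-! ## Auxiliary lemmas -/

namespace CanonicalExtension

variable {L : Type*} [DistribLattice L] [OrderBot L] [OrderTop L]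
  {Lδ : Type*} [CompleteLattice Lδ] (C : CanonicalExtension L Lδ)

lemma e_mono {a b : L} (h : a ≤ b) : C.e a ≤ C.e b := by
  calc C.e a = C.e a ⊓ C.e b := by rw [← C.map_inf, inf_eq_left.mpr h]
    _ ≤ C.e b := inf_le_right

lemma e_le_e {a b : L} (h : C.e a ≤ C.e b) : a ≤ b := by
  have : C.e (a ⊓ b) = C.e a := by rw [C.map_inf, inf_eq_left.mpr h]
  exact inf_eq_left.mp (C.inj this)

lemma map_fsup {ι : Type*} (s : Finset ι) (f : ι → L) :
    C.e (s.sup f) = s.sup (fun i => C.e (f i)) := by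
  classical
  induction s using Finset.induction_on with
  | empty => simp [C.map_bot]
  | insert _ _ h ih => simp [Finset.sup_insert, C.map_sup, ih]

lemma map_finf {ι : Type*} (s : Finset ι) (f : ι → L) :
    C.e (s.inf f) = s.inf (fun i => C.e (f i)) := by
  classical
  induction s using Finset.induction_on with
  | empty => simp [C.map_top]
  | insert _ _ h ih => simp [Finset.inf_insert, C.map_inf, ih]

lemma sSup_coe (s : Finset L) : sSup (C.e '' ↑s) = C.e (s.sup id) := by
  rw [C.map_fsup, sSup_image]
  simp [Finset.sup_eq_iSup]

lemma sInf_coe (s : Finset L) : sInf (C.e '' ↑s) = C.e (s.inf id) := by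
  rw [C.map_finf, sInf_image]
  simp [Finset.inf_eq_iInf]

end CanonicalExtension

section AuxLemmas

variable {W R : Type*} [HeytingAlgebra W] [DistribLattice R] [BoundedOrder R]
  {Wδ Rδ : Type*} [CompletelyDistribLattice Wδ] [CompletelyDistribLattice Rδ]
  (F : LRCAlgebra W R)
  (CW : CanonicalExtension W Wδ) (CR : CanonicalExtension R Rδ)

/-- `box` is antitone in its first coordinate. -/
lemma box_anti {α β : R} (h : α ≤ β) (a : W) : F.box β a ≤ F.box α a := by
  calc F.box β a = F.box (α ⊔ β) a := by rw [sup_eq_right.mpr h]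
    _ = F.box α a ⊓ F.box β a := F.box_sup α β a
    _ ≤ F.box α a := inf_le_left

/-- `box` turns finite (Finset) joins in the first coordinate into meets. -/
lemma box_fsup {ι : Type*} (s : Finset ι) (f : ι → R) (a : W) :
    F.box (s.sup f) a = s.inf (fun i => F.box (f i) a) := by
  classical
  induction s using Finset.induction_on with
  | empty => simp [F.box_bot]
  | insert _ _ h ih => simp [Finset.sup_insert, Finset.inf_insert, F.box_sup, ih]

/-- `boxPiKO` expressed as a `sSup` of an image, to feed compactness. -/
lemma boxPiKO_eq (κ : Rδ) (o : Wδ) :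
    boxPiKO F CW CR κ o = sSup (CW.e '' {c | ∃ q : R × W,
      (CW.e q.2 ≤ o ∧ κ ≤ CR.e q.1) ∧ F.box q.1 q.2 = c}) := by
  rw [boxPiKO, iSup]
  congr 1
  ext x
  constructor
  · rintro ⟨⟨⟨α, a⟩, h⟩, rfl⟩
    exact ⟨F.box α a, ⟨(α, a), h, rfl⟩, rfl⟩
  · rintro ⟨c, ⟨q, h, rfl⟩, rfl⟩
    exact ⟨⟨q, h⟩, rfl⟩

/-- Key lemma: `B3` holds for the `KO`-approximants. -/
lemma boxPiKO_b3 (κ₁ κ₂ : Rδ) (o : Wδ) :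
    boxPiKO F CW CR κ₁ (boxPiKO F CW CR κ₂ o) ≤
      boxPiKO F CW CR (mulSigmaKK F CR κ₁ κ₂) o := by
  classical
  refine iSup_le fun p => ?_
  obtain ⟨⟨α, b⟩, hb, hα⟩ := p
  rw [boxPiKO_eq] at hb
  have hcmp0 : sInf (CW.e '' {b}) ≤ sSup (CW.e '' {c | ∃ q : R × W,
      (CW.e q.2 ≤ o ∧ κ₂ ≤ CR.e q.1) ∧ F.box q.1 q.2 = c}) := by
    simpa using hb
  obtain ⟨Fs, Gs, hFs, hGs, hcmp⟩ := CW.compact _ _ hcmp0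
  have hbG : b ≤ Gs.sup id := by
    apply CW.e_le_e
    calc CW.e b = sInf (CW.e '' {b}) := by simp
      _ ≤ sInf (CW.e '' ↑Fs) := sInf_le_sInf (Set.image_mono hFs)
      _ ≤ sSup (CW.e '' ↑Gs) := hcmp
      _ = CW.e (Gs.sup id) := CW.sSup_coe Gs
  have hex : ∀ g : {x // x ∈ Gs}, ∃ q : R × W,
      (CW.e q.2 ≤ o ∧ κ₂ ≤ CR.e q.1) ∧ F.box q.1 q.2 = g.1 := fun g => hGs g.2
  choose sel hsel using hex
  set βstar : R := Gs.attach.inf (fun g => (sel g).1) with hβstar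
  set astar : W := Gs.attach.sup (fun g => (sel g).2) with hastar
  have h1 : b ≤ F.box βstar astar := by
    refine hbG.trans ?_
    rw [← Finset.sup_attach]
    refine Finset.sup_le fun g _ => ?_
    calc (id g.1 : W) = F.box (sel g).1 (sel g).2 := ((hsel g).2).symm
      _ ≤ F.box βstar (sel g).2 :=
          box_anti F
            (Finset.inf_le (f := fun g => (sel g).1) (Finset.mem_attach _ g)) _
      _ ≤ F.box βstar astar :=
          F.box_mono βstar
            (Finset.le_sup (f := fun g => (sel g).2) (Finset.mem_attach _ g))
  have h2 : F.box α b ≤ F.box (F.mul α βstar) astar :=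
    (F.box_mono α h1).trans (F.b3 α βstar astar)
  have hβ : κ₂ ≤ CR.e βstar := by
    rw [hβstar, CR.map_finf]
    exact Finset.le_inf fun g _ => (hsel g).1.2
  have hea : CW.e astar ≤ o := by
    rw [hastar, CW.map_fsup]
    exact Finset.sup_le fun g _ => (hsel g).1.1
  have hmul : mulSigmaKK F CR κ₁ κ₂ ≤ CR.e (F.mul α βstar) := by
    rw [mulSigmaKK]
    exact iInf_le (fun p : {p : R × R // κ₁ ≤ CR.e p.1 ∧ κ₂ ≤ CR.e p.2} =>
      CR.e (F.mul p.1.1 p.1.2)) ⟨(α, βstar), hα, hβ⟩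
  exact le_trans (CW.e_mono h2)
    (le_iSup (fun p : {p : R × W // CW.e p.2 ≤ o ∧
        mulSigmaKK F CR κ₁ κ₂ ≤ CR.e p.1} => CW.e (F.box p.1.1 p.1.2))
      ⟨(F.mul α βstar, astar), hea, hmul⟩)

/-- If a closed element `κ` lies below a join of elements `lam i`, then the
meet of the `boxPiKO (lam i) o` lies below `boxPiKO κ o`. -/
lemma boxPiKO_of_closed_le {ι : Sort*} (lam : ι → Rδ) (κ : Rδ)
    (hκ : CR.IsClosed κ) (hle : κ ≤ ⨆ i, lam i) (o : Wδ) :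
    ⨅ i, boxPiKO F CW CR (lam i) o ≤ boxPiKO F CW CR κ o := by
  classical
  simp only [boxPiKO]
  rw [iInf_iSup_eq]
  refine iSup_le fun f => ?_
  set γ : ι → R := fun i => ((f i).1 : R × W).1 with hγdef
  obtain ⟨S₀, hS₀⟩ := hκ
  have hκγ : κ ≤ sSup (CR.e '' Set.range γ) := by
    have h1 : κ ≤ ⨆ i, CR.e (γ i) := hle.trans (iSup_mono fun i => (f i).2.2)
    have h2 : sSup (CR.e '' Set.range γ) = ⨆ i, CR.e (γ i) := by
      rw [← Set.range_comp]; rfl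
    rw [h2]; exact h1
  obtain ⟨Fs, Gs, hFs, hGs, hcmp⟩ := CR.compact S₀ (Set.range γ)
    (by rw [← hS₀]; exact hκγ)
  have hκG : κ ≤ CR.e (Gs.sup id) := by
    calc κ = sInf (CR.e '' S₀) := hS₀
      _ ≤ sInf (CR.e '' ↑Fs) := sInf_le_sInf (Set.image_mono hFs)
      _ ≤ sSup (CR.e '' ↑Gs) := hcmp
      _ = CR.e (Gs.sup id) := CR.sSup_coe Gs
  have hex : ∀ g : {x // x ∈ Gs}, ∃ i, γ i = g.1 := fun g => hGs g.2
  choose sel hsel using hex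
  set astar : W := Gs.attach.sup (fun g => ((f (sel g)).1 : R × W).2)
    with hastar
  set gstar : R := Gs.sup id with hgstar
  have hea : CW.e astar ≤ o := by
    rw [hastar, CW.map_fsup]
    exact Finset.sup_le fun g _ => (f (sel g)).2.1
  have hchain : ⨅ i, CW.e (F.box (γ i) ((f i).1 : R × W).2) ≤
      CW.e (F.box gstar astar) := by
    have hbox : F.box gstar astar =
        Gs.attach.inf (fun g => F.box g.1 astar) := by
      rw [hgstar, box_fsup, ← Finset.inf_attach]
      simp only [id_eq]
    rw [hbox, CW.map_finf]
    refine Finset.le_inf fun g _ => ?_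
    calc (⨅ i, CW.e (F.box (γ i) ((f i).1 : R × W).2))
        ≤ CW.e (F.box (γ (sel g)) ((f (sel g)).1 : R × W).2) := iInf_le _ _
      _ = CW.e (F.box g.1 ((f (sel g)).1 : R × W).2) := by rw [hsel g]
      _ ≤ CW.e (F.box g.1 astar) :=
          CW.e_mono (F.box_mono _ (Finset.le_sup
            (f := fun g => ((f (sel g)).1 : R × W).2) (Finset.mem_attach _ g)))
  exact hchain.trans
    (le_iSup (fun p : {p : R × W // CW.e p.2 ≤ o ∧ κ ≤ CR.e p.1} =>
      CW.e (F.box p.1.1 p.1.2)) ⟨(gstar, astar), hea, hκG⟩)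

end AuxLemmas

/-! ## Statement 6: canonicity of axiom B3 -/

/-- **Canonicity of axiom B3**: in the canonical extension of a heterogeneous
LRC-algebra, `q ▷^π (w ▷^π u) ≤ (q ·^σ w) ▷^π u` for all `q, w ∈ Rδ` and
`u ∈ Wδ`. -/
theorem canonicity_b3 (F : LRCAlgebra W R)
    (CW : CanonicalExtension W Wδ) (CR : CanonicalExtension R Rδ)
    (q w : Rδ) (u : Wδ) :
    boxPi F CW CR q (boxPi F CW CR w u) ≤
      boxPi F CW CR (mulSigma F CR q w) u := by
  refine le_iInf fun x => ?_
  obtain ⟨⟨κ, o⟩, ho, huo, hκc, hκle⟩ := x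
  have step1 : boxPi F CW CR q (boxPi F CW CR w u) ≤
      ⨅ p : {p : Rδ × Rδ // CR.IsClosed p.1 ∧ CR.IsClosed p.2 ∧
          p.1 ≤ q ∧ p.2 ≤ w},
        boxPiKO F CW CR (mulSigmaKK F CR p.1.1 p.1.2) o := by
    refine le_iInf fun p => ?_
    obtain ⟨⟨κ₁, κ₂⟩, hc1, hc2, h1, h2⟩ := p
    have hopen : CW.IsOpen (boxPiKO F CW CR κ₂ o) :=
      ⟨_, boxPiKO_eq F CW CR κ₂ o⟩
    have hwu : boxPi F CW CR w u ≤ boxPiKO F CW CR κ₂ o :=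
      iInf_le (fun x : {x : Rδ × Wδ // CW.IsOpen x.2 ∧ u ≤ x.2 ∧
          CR.IsClosed x.1 ∧ x.1 ≤ w} => boxPiKO F CW CR x.1.1 x.1.2)
        ⟨(κ₂, o), ho, huo, hc2, h2⟩
    refine le_trans (iInf_le (fun x : {x : Rδ × Wδ // CW.IsOpen x.2 ∧
        boxPi F CW CR w u ≤ x.2 ∧ CR.IsClosed x.1 ∧ x.1 ≤ q} =>
        boxPiKO F CW CR x.1.1 x.1.2)
      ⟨(κ₁, boxPiKO F CW CR κ₂ o), hopen, hwu, hc1, h1⟩) ?_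
    exact boxPiKO_b3 F CW CR κ₁ κ₂ o
  exact step1.trans (boxPiKO_of_closed_le F CW CR
    (fun p : {p : Rδ × Rδ // CR.IsClosed p.1 ∧ CR.IsClosed p.2 ∧
        p.1 ≤ q ∧ p.2 ≤ w} => mulSigmaKK F CR p.1.1 p.1.2) κ hκc hκle o)
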